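/- Let A ∈ [0,1], p₁, p₂ ∈ [0,1], and let ρ_A = [[(1+A)/2, −(i/2)√(1−A²)], [(i/2)√(1−A²), (1−A)/2]]. Let ε_GAD be the generalized amplitude damping channel with Kraus operators E₀ = √p₁·diag(1, √(1−p₂)), E₁ = √p₁·[[0, √p₂],[0,0]], E₂ = √(1−p₁)·diag(√(1−p₂), 1), E₃ = √(1−p₁)·[[0,0],[√p₂, 0]]. Then F_{l₁}(ρ_A) − F_{l₁}(ε_GAD(ρ_A)) = F_R(ρ_A) − F_R(ε_GAD(ρ_A)) = (1 − √(1−p₂))·√(1−A²). -/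

import Mathlib

open Matrix Kronecker BigOperators
open scoped ComplexOrder

noncomputable section

/-- A density matrix: positive semidefinite with trace 1. -/
def IsDensityMatrix {n : Type*} [Fintype n] [DecidableEq n] (ρ : Matrix n n ℂ) : Prop :=
  ρ.PosSemidef ∧ ρ.trace = 1

/-- The l₁-norm imaginarity measure: sum of |Im ρᵢⱼ| over off-diagonal entries. -/
noncomputable def Fl1 {n : Type*} [Fintype n] [DecidableEq n] (ρ : Matrix n n ℂ) : ℝ :=
  ∑ i, ∑ j, if i = j then 0 else |(ρ i j).im|

/-- The trace norm ‖M‖₁ = Tr √(M†M). -/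
noncomputable def traceNorm {n : Type*} [Fintype n] [DecidableEq n] (M : Matrix n n ℂ) : ℝ :=
  (((Matrix.posSemidef_conjTranspose_mul_self M).1.eigenvectorUnitary.1 *
      diagonal (((↑) : ℝ → ℂ) ∘ (Real.sqrt ∘ (Matrix.posSemidef_conjTranspose_mul_self M).1.eigenvalues)) *
      (star (Matrix.posSemidef_conjTranspose_mul_self M).1.eigenvectorUnitary : Matrix n n ℂ)).trace).re

/-- The robustness of imaginarity: (1/2)‖ρ − ρᵀ‖₁. -/
noncomputable def FR {n : Type*} [Fintype n] [DecidableEq n] (ρ : Matrix n n ℂ) : ℝ :=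
  traceNorm (ρ - ρᵀ) / 2

/-- Von Neumann entropy (base-2), via eigenvalues of a Hermitian matrix
(junk value 0 if not Hermitian). -/
noncomputable def vnEntropy {n : Type*} [Fintype n] [DecidableEq n] (σ : Matrix n n ℂ) : ℝ :=
  if h : σ.IsHermitian then -∑ j, (h.eigenvalues j) * Real.logb 2 (h.eigenvalues j) else 0

/-- The relative entropy of imaginarity: S(Re ρ) − S(ρ), Re ρ = (ρ + ρᵀ)/2. -/
noncomputable def Fr {n : Type*} [Fintype n] [DecidableEq n] (ρ : Matrix n n ℂ) : ℝ :=
  vnEntropy ((1/2 : ℂ) • (ρ + ρᵀ)) - vnEntropy ρ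

/-- The canonical single-qubit state ρ_A. -/
noncomputable def rhoA (A : ℝ) : Matrix (Fin 2) (Fin 2) ℂ :=
  !![(((1 + A) / 2 : ℝ) : ℂ), -(Complex.I / 2) * (Real.sqrt (1 - A ^ 2) : ℂ);
     (Complex.I / 2) * (Real.sqrt (1 - A ^ 2) : ℂ), (((1 - A) / 2 : ℝ) : ℂ)]

/-- Density matrix of the maximal imaginary state |+⟩ = (|0⟩ + i|1⟩)/√2. -/
noncomputable def Mplus : Matrix (Fin 2) (Fin 2) ℂ :=
  (1/2 : ℂ) • !![1, -Complex.I; Complex.I, 1]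

/-- The generalized amplitude damping channel. -/
noncomputable def gad (p₁ p₂ : ℝ) (ρ : Matrix (Fin 2) (Fin 2) ℂ) : Matrix (Fin 2) (Fin 2) ℂ :=
  ((Real.sqrt p₁ : ℂ) • !![1, 0; 0, (Real.sqrt (1 - p₂) : ℂ)]) * ρ *
    ((Real.sqrt p₁ : ℂ) • !![1, 0; 0, (Real.sqrt (1 - p₂) : ℂ)])ᴴ +
  ((Real.sqrt p₁ : ℂ) • !![0, (Real.sqrt p₂ : ℂ); 0, 0]) * ρ *
    ((Real.sqrt p₁ : ℂ) • !![0, (Real.sqrt p₂ : ℂ); 0, 0])ᴴ +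
  ((Real.sqrt (1 - p₁) : ℂ) • !![(Real.sqrt (1 - p₂) : ℂ), 0; 0, 1]) * ρ *
    ((Real.sqrt (1 - p₁) : ℂ) • !![(Real.sqrt (1 - p₂) : ℂ), 0; 0, 1])ᴴ +
  ((Real.sqrt (1 - p₁) : ℂ) • !![0, 0; (Real.sqrt p₂ : ℂ), 0]) * ρ *
    ((Real.sqrt (1 - p₁) : ℂ) • !![0, 0; (Real.sqrt p₂ : ℂ), 0])ᴴ

/-- auxiliary: trace norm of the antisymmetric imaginary matrix. -/
lemma traceNorm_aux (s : ℝ) (hs : 0 ≤ s) :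
    traceNorm !![(0:ℂ), -(Complex.I * s); Complex.I * s, 0] = 2 * s := by
  set M : Matrix (Fin 2) (Fin 2) ℂ := !![(0:ℂ), -(Complex.I * s); Complex.I * s, 0] with hM
  have hH := (Matrix.posSemidef_conjTranspose_mul_self M).1
  have hsq : Mᴴ * M = algebraMap ℝ (Matrix (Fin 2) (Fin 2) ℂ) (s ^ 2) := by
    ext i j
    fin_cases i <;> fin_cases j <;>
      simp [hM, pow_two, Matrix.mul_apply, Fin.sum_univ_two, Matrix.algebraMap_matrix_apply,
        Matrix.conjTranspose_apply, Complex.ext_iff] <;> ring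
  have key : traceNorm M = (cfc Real.sqrt (Mᴴ * M)).trace.re := by
    rw [traceNorm, hH.cfc_eq, Matrix.IsHermitian.cfc, Unitary.conjStarAlgAut_apply]
    rfl
  rw [key, hsq, cfc_algebraMap, Real.sqrt_sq hs]
  simp [Matrix.trace, Fin.sum_univ_two, Matrix.algebraMap_matrix_apply]
  try ring

lemma gad01 (p₁ p₂ : ℝ) (hp₁0 : 0 ≤ p₁) (hp₁1 : p₁ ≤ 1) (ρ : Matrix (Fin 2) (Fin 2) ℂ) :
    gad p₁ p₂ ρ 0 1 = (Real.sqrt (1 - p₂) : ℂ) * ρ 0 1 := by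
  have ha : ((Real.sqrt p₁ : ℝ) : ℂ) ^ 2 = (p₁ : ℂ) := by
    rw [← Complex.ofReal_pow, Real.sq_sqrt hp₁0]
  have hb : ((Real.sqrt (1 - p₁) : ℝ) : ℂ) ^ 2 = ((1 - p₁ : ℝ) : ℂ) := by
    rw [← Complex.ofReal_pow, Real.sq_sqrt (by linarith)]
  rw [Matrix.eta_fin_two ρ]
  simp [gad, Matrix.mul_fin_two, Complex.conj_ofReal, Matrix.vecMul, dotProduct,
    Fin.sum_univ_two, Matrix.conjTranspose_apply]
  push_cast at ha hb ⊢
  linear_combination ((Real.sqrt (1 - p₂) : ℂ) * ρ 0 1) * ha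
    + ((Real.sqrt (1 - p₂) : ℂ) * ρ 0 1) * hb

lemma gad10 (p₁ p₂ : ℝ) (hp₁0 : 0 ≤ p₁) (hp₁1 : p₁ ≤ 1) (ρ : Matrix (Fin 2) (Fin 2) ℂ) :
    gad p₁ p₂ ρ 1 0 = (Real.sqrt (1 - p₂) : ℂ) * ρ 1 0 := by
  have ha : ((Real.sqrt p₁ : ℝ) : ℂ) ^ 2 = (p₁ : ℂ) := by
    rw [← Complex.ofReal_pow, Real.sq_sqrt hp₁0]
  have hb : ((Real.sqrt (1 - p₁) : ℝ) : ℂ) ^ 2 = ((1 - p₁ : ℝ) : ℂ) := by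
    rw [← Complex.ofReal_pow, Real.sq_sqrt (by linarith)]
  rw [Matrix.eta_fin_two ρ]
  simp [gad, Matrix.mul_fin_two, Complex.conj_ofReal, Matrix.vecMul, dotProduct,
    Fin.sum_univ_two, Matrix.conjTranspose_apply]
  push_cast at ha hb ⊢
  linear_combination ((Real.sqrt (1 - p₂) : ℂ) * ρ 1 0) * ha
    + ((Real.sqrt (1 - p₂) : ℂ) * ρ 1 0) * hb

/-- decay of F_{l₁} and F_R under the generalized amplitude damping channel. -/
theorem decay_gad (A p₁ p₂ : ℝ) (hA0 : 0 ≤ A) (hA1 : A ≤ 1)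
    (hp₁0 : 0 ≤ p₁) (hp₁1 : p₁ ≤ 1) (hp₂0 : 0 ≤ p₂) (hp₂1 : p₂ ≤ 1) :
    Fl1 (rhoA A) - Fl1 (gad p₁ p₂ (rhoA A))
      = (1 - Real.sqrt (1 - p₂)) * Real.sqrt (1 - A ^ 2) ∧
    FR (rhoA A) - FR (gad p₁ p₂ (rhoA A))
      = (1 - Real.sqrt (1 - p₂)) * Real.sqrt (1 - A ^ 2) := by
  set s := Real.sqrt (1 - A ^ 2) with hsdef
  have hs : 0 ≤ s := Real.sqrt_nonneg _
  set q := Real.sqrt (1 - p₂) with hqdef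
  have hq : 0 ≤ q := Real.sqrt_nonneg _
  have h01 := gad01 p₁ p₂ hp₁0 hp₁1 (rhoA A)
  have h10 := gad10 p₁ p₂ hp₁0 hp₁1 (rhoA A)
  have hr01 : rhoA A 0 1 = -(Complex.I / 2) * (s : ℂ) := by simp [rhoA, hsdef]
  have hr10 : rhoA A 1 0 = (Complex.I / 2) * (s : ℂ) := by simp [rhoA, hsdef]
  constructor
  · have e1 : Fl1 (rhoA A) = s := by
      simp [Fl1, Fin.sum_univ_two, hr01, hr10, Complex.div_im]
      rw [abs_of_nonneg (by positivity)]
      ring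
    have e2 : Fl1 (gad p₁ p₂ (rhoA A)) = q * s := by
      simp [Fl1, Fin.sum_univ_two, h01, h10, hr01, hr10, Complex.div_im, hqdef]
      rw [abs_of_nonneg hs, abs_of_nonneg (Real.sqrt_nonneg (1 - p₂))]
      ring
    rw [e1, e2]; ring
  · have hd1 : rhoA A - (rhoA A)ᵀ = !![(0:ℂ), -(Complex.I * s); Complex.I * s, 0] := by
      ext i j
      rw [Matrix.sub_apply, Matrix.transpose_apply]
      fin_cases i <;> fin_cases j <;> simp [rhoA] <;> ring
    have hd2 : gad p₁ p₂ (rhoA A) - (gad p₁ p₂ (rhoA A))ᵀ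
        = !![(0:ℂ), -(Complex.I * ((q * s : ℝ) : ℂ)); Complex.I * ((q * s : ℝ) : ℂ), 0] := by
      ext i j
      rw [Matrix.sub_apply, Matrix.transpose_apply]
      fin_cases i <;> fin_cases j <;> simp [h01, h10, hr01, hr10] <;> push_cast <;> ring
    have e1 : FR (rhoA A) = s := by
      rw [FR, hd1, traceNorm_aux s hs]; ring
    have e2 : FR (gad p₁ p₂ (rhoA A)) = q * s := by
      rw [FR, hd2, traceNorm_aux (q * s) (mul_nonneg hq hs)]; ring
    rw [e1, e2]; ring
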